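/- If the polynomial χ(X) = X³ - c₁X² - c₂X - c₃ is irreducible in F[X], then the only solution in F³ of the equation Q(x₁,x₂,x₃) = 0 is (0,0,0). -/

import Mathlib

/-- The group law `⊕` on `F³` (encoded as `F × F × F`). -/
def oplus {F : Type*} [CommRing F] (c₁ c₂ c₃ : F) (x y : F × F × F) : F × F × F :=
  ⟨x.1 * y.1 + c₃ * (x.2.1 * y.2.2 + x.2.2 * y.2.1) + c₁ * c₃ * (x.2.2 * y.2.2),
   x.1 * y.2.1 + x.2.1 * y.1 + c₂ * (x.2.1 * y.2.2 + x.2.2 * y.2.1)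
     + (c₁ * c₂ + c₃) * (x.2.2 * y.2.2),
   x.2.1 * y.2.1 + x.1 * y.2.2 + x.2.2 * y.1 + c₁ * (x.2.1 * y.2.2 + x.2.2 * y.2.1)
     + (c₁ ^ 2 + c₂) * (x.2.2 * y.2.2)⟩

/-- The cubic form `Q`. -/
def Qf {F : Type*} [CommRing F] (c₁ c₂ c₃ : F) (x : F × F × F) : F :=
  -c₂ * x.1 * x.2.1 ^ 2 + (c₂ ^ 2 - 2 * (c₁ * c₃)) * x.1 * x.2.2 ^ 2
    + c₁ * x.1 ^ 2 * x.2.1 + (c₁ ^ 2 + 2 * c₂) * x.1 ^ 2 * x.2.2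
    - (c₂ * c₃) * x.2.1 * x.2.2 ^ 2 + (c₁ * c₃) * x.2.1 ^ 2 * x.2.2
    - (c₁ * c₂ + 3 * c₃) * x.1 * x.2.1 * x.2.2
    + x.1 ^ 3 + c₃ * x.2.1 ^ 3 + c₃ ^ 2 * x.2.2 ^ 3

/-- `n`-fold `⊕`-power. -/
def opow {F : Type*} [CommRing F] (c₁ c₂ c₃ : F) : ℕ → F × F × F → F × F × F
  | 0, _ => (1, 0, 0)
  | n + 1, x => oplus c₁ c₂ c₃ x (opow c₁ c₂ c₃ n x)

/-- `Q` is multiplicative for `⊕`. -/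
theorem Qf_oplus {F : Type*} [CommRing F] (c₁ c₂ c₃ : F) (x y : F × F × F) :
    Qf c₁ c₂ c₃ (oplus c₁ c₂ c₃ x y) = Qf c₁ c₂ c₃ x * Qf c₁ c₂ c₃ y := by
  obtain ⟨a, b, c⟩ := x; obtain ⟨d, e, g⟩ := y
  simp only [Qf, oplus]
  ring

open Polynomial in
theorem stmt13 {F : Type*} [Field F] (c₁ c₂ c₃ : F)
    (hirr : Irreducible (X ^ 3 - C c₁ * X ^ 2 - C c₂ * X - C c₃)) :
    ∀ x : F × F × F, Qf c₁ c₂ c₃ x = 0 → x = (0, 0, 0) := by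
  have hmon : (X ^ 3 - C c₁ * X ^ 2 - C c₂ * X - C c₃ : F[X]).Monic := by monicity!
  have hdeg : (X ^ 3 - C c₁ * X ^ 2 - C c₂ * X - C c₃ : F[X]).natDegree = 3 := by
    compute_degree!
  have hne : (X ^ 3 - C c₁ * X ^ 2 - C c₂ * X - C c₃ : F[X]) ≠ 0 := hmon.ne_zero
  have hdeg' : (X ^ 3 - C c₁ * X ^ 2 - C c₂ * X - C c₃ : F[X]).degree = 3 := by
    rw [Polynomial.degree_eq_natDegree hne, hdeg]; rfl
  haveI := Fact.mk hirr
  set α : AdjoinRoot (X ^ 3 - C c₁ * X ^ 2 - C c₂ * X - C c₃ : F[X]) :=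
    AdjoinRoot.root _ with hαdef
  set f : F →+* AdjoinRoot (X ^ 3 - C c₁ * X ^ 2 - C c₂ * X - C c₃ : F[X]) :=
    AdjoinRoot.of _ with hfdef
  have hα : α ^ 3 = f c₁ * α ^ 2 + f c₂ * α + f c₃ := by
    have h2 := AdjoinRoot.eval₂_root (X ^ 3 - C c₁ * X ^ 2 - C c₂ * X - C c₃ : F[X])
    simp only [eval₂_sub, eval₂_mul, eval₂_pow, eval₂_X, eval₂_C] at h2
    linear_combination h2
  set φ : F × F × F → AdjoinRoot (X ^ 3 - C c₁ * X ^ 2 - C c₂ * X - C c₃ : F[X]) :=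
    fun x => f x.1 + f x.2.1 * α + f x.2.2 * α ^ 2 with hφdef
  -- multiplicativity of φ
  have hφmul : ∀ x y, φ (oplus c₁ c₂ c₃ x y) = φ x * φ y := by
    intro ⟨a, b, c⟩ ⟨d, e, g⟩
    simp only [hφdef, oplus, map_add, map_mul, map_pow, map_ofNat, map_one]
    linear_combination (-(f b * f g) - f c * f e - f c * f g * (α + f c₁)) * hα
  -- φ x = mk of the corresponding polynomial
  have hφmk : ∀ x : F × F × F,
      φ x = AdjoinRoot.mk _ (C x.1 + C x.2.1 * X + C x.2.2 * X ^ 2) := by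
    intro x
    simp only [hφdef, map_add, map_mul, map_pow, AdjoinRoot.mk_C, AdjoinRoot.mk_X, hαdef,
      hfdef]
  -- injectivity (at 0)
  have hφzero : ∀ x : F × F × F, φ x = 0 → x = (0, 0, 0) := by
    intro x hx
    rw [hφmk x, AdjoinRoot.mk_eq_zero] at hx
    have hp0 : (C x.1 + C x.2.1 * X + C x.2.2 * X ^ 2 : F[X]) = 0 := by
      by_contra hp
      have h1 := Polynomial.natDegree_le_of_dvd hx hp
      have h2 : (C x.1 + C x.2.1 * X + C x.2.2 * X ^ 2 : F[X]).natDegree ≤ 2 := by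
        compute_degree
      omega
    have e0 : x.1 = (C x.1 + C x.2.1 * X + C x.2.2 * X ^ 2 : F[X]).coeff 0 := by simp
    have e1 : x.2.1 = (C x.1 + C x.2.1 * X + C x.2.2 * X ^ 2 : F[X]).coeff 1 := by simp
    have e2 : x.2.2 = (C x.1 + C x.2.1 * X + C x.2.2 * X ^ 2 : F[X]).coeff 2 := by
      simp [Polynomial.coeff_C]
    rw [hp0] at e0 e1 e2
    simp only [Polynomial.coeff_zero] at e0 e1 e2
    exact Prod.ext e0 (Prod.ext e1 e2)
  -- surjectivity
  have hφsurj : ∀ z : AdjoinRoot (X ^ 3 - C c₁ * X ^ 2 - C c₂ * X - C c₃ : F[X]),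
      ∃ x : F × F × F, φ x = z := by
    intro z
    obtain ⟨q, rfl⟩ := AdjoinRoot.mk_surjective z
    set r : F[X] := q %ₘ (X ^ 3 - C c₁ * X ^ 2 - C c₂ * X - C c₃) with hrdef
    have hmk : AdjoinRoot.mk (X ^ 3 - C c₁ * X ^ 2 - C c₂ * X - C c₃) r
        = AdjoinRoot.mk (X ^ 3 - C c₁ * X ^ 2 - C c₂ * X - C c₃) q := by
      rw [AdjoinRoot.mk_eq_mk]
      refine ⟨-(q /ₘ (X ^ 3 - C c₁ * X ^ 2 - C c₂ * X - C c₃)), ?_⟩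
      have := Polynomial.modByMonic_add_div q (X ^ 3 - C c₁ * X ^ 2 - C c₂ * X - C c₃)
      rw [hrdef]
      linear_combination this
    have hrdeg : r.natDegree < 3 := by
      have := Polynomial.degree_modByMonic_lt q hmon
      rw [hdeg'] at this
      rcases eq_or_ne r 0 with h | h
      · simp [h]
      · exact (Polynomial.natDegree_lt_iff_degree_lt h).mpr (by exact_mod_cast this)
    refine ⟨(r.coeff 0, r.coeff 1, r.coeff 2), ?_⟩
    rw [hφmk, ← hmk, AdjoinRoot.mk_eq_mk]
    refine ⟨0, ?_⟩
    have : (C (r.coeff 0) + C (r.coeff 1) * X + C (r.coeff 2) * X ^ 2 : F[X]) = r := by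
      ext n
      rcases n with _ | _ | _ | n
      · simp
      · simp
      · simp [Polynomial.coeff_C]
      · have : r.coeff (n + 3) = 0 := Polynomial.coeff_eq_zero_of_natDegree_lt (by omega)
        simp [Polynomial.coeff_C, this]
    rw [this]; ring
  -- main argument
  intro x hQ
  by_contra hx
  have hφx : φ x ≠ 0 := fun h => hx (hφzero x h)
  obtain ⟨y, hy⟩ := hφsurj (φ x)⁻¹
  have hone : φ (oplus c₁ c₂ c₃ x y) = φ (1, 0, 0) := by
    rw [hφmul, hy, mul_inv_cancel₀ hφx]
    simp [hφdef]
  -- injectivity from hφzero via subtraction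
  have hsub : oplus c₁ c₂ c₃ x y = (1, 0, 0) := by
    set w := oplus c₁ c₂ c₃ x y with hw
    have : φ (w.1 - 1, w.2.1 - 0, w.2.2 - 0) = 0 := by
      simp only [hφdef, map_sub]
      rw [hφdef] at hone
      simp only at hone
      linear_combination hone
    have h0 := hφzero _ this
    have h1 : w.1 - 1 = 0 := congrArg Prod.fst h0
    have h2 : w.2.1 - 0 = 0 := congrArg (fun p => p.2.1) h0
    have h3 : w.2.2 - 0 = 0 := congrArg (fun p => p.2.2) h0
    refine Prod.ext ?_ (Prod.ext ?_ ?_)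
    · simpa [sub_eq_zero] using h1
    · simpa [sub_eq_zero] using h2
    · simpa [sub_eq_zero] using h3
  have hQ1 : Qf c₁ c₂ c₃ (oplus c₁ c₂ c₃ x y) = 0 := by
    rw [Qf_oplus, hQ, zero_mul]
  rw [hsub] at hQ1
  simp [Qf] at hQ1
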